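/- arXiv:1906.04038 — 2 statements merged into one kernel-verified Lean document; each statement's English description precedes it below -/
import Mathlib

section
/- Fix d ≥ 1. For every y ∈ ℝ^d, the Capra conjugate of the ℓ0 pseudonorm satisfies sup_{x ∈ ℝ^d} ( ¢(x,y) − ℓ0(x) ) = max_{l ∈ {0,1,…,d}} ( ‖y‖_(l) − l ). -/
noncomputable section

variable {d : ℕ}

/-- The projection `x_K` of `x` onto the coordinates in `K`
(the components outside `K` vanish). -/
def restr (K : Finset (Fin d)) (x : EuclideanSpace ℝ (Fin d)) : EuclideanSpace ℝ (Fin d) :=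
  WithLp.toLp 2 (fun i => if i ∈ K then x i else 0)

/-- The 2-k-symmetric gauge norm `‖y‖_(k) = sup {‖y_K‖ : |K| ≤ k}`
(equal to `0` for `k = 0`, by the convention `‖·‖_(0) = 0`). -/
def gaugeNorm (k : ℕ) (y : EuclideanSpace ℝ (Fin d)) : ℝ :=
  ⨆ K : {K : Finset (Fin d) // K.card ≤ k}, ‖restr (K : Finset (Fin d)) y‖

/-- The ℓ₀ pseudonorm: the number of nonzero components. -/
def l0 (x : EuclideanSpace ℝ (Fin d)) : ℕ :=
  (Finset.univ.filter fun i => x i ≠ 0).card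

open Classical in
/-- The Capra coupling `¢(x,y) = ⟨x,y⟩ / ‖x‖` for `x ≠ 0`, and `¢(0,y) = 0`. -/
def capra (x y : EuclideanSpace ℝ (Fin d)) : ℝ :=
  if x = 0 then 0 else (inner ℝ x y : ℝ) / ‖x‖

/-- The Capra conjugate of ℓ₀: `y ↦ max_{0 ≤ l ≤ d} (‖y‖_(l) − l)`. -/
def capraConjL0 (y : EuclideanSpace ℝ (Fin d)) : ℝ :=
  ⨆ l : Fin (d + 1), (gaugeNorm (l : ℕ) y - ((l : ℕ) : ℝ))

/-- `L₀(x) = sup_y (⟨x,y⟩ − max_{0 ≤ l ≤ d}(‖y‖_(l) − l))`, with values in `ℝ̄ = EReal`. -/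
def L0 (x : EuclideanSpace ℝ (Fin d)) : EReal :=
  ⨆ y : EuclideanSpace ℝ (Fin d), (((inner ℝ x y : ℝ) - capraConjL0 y : ℝ) : EReal)

/-- The k-support norm: the dual norm of the 2-k-symmetric gauge norm,
`‖y‖^sp_(k) = sup {⟨x,y⟩ : ‖x‖_(k) ≤ 1}`. -/
def suppNorm (k : ℕ) (y : EuclideanSpace ℝ (Fin d)) : ℝ :=
  sSup {c : ℝ | ∃ x : EuclideanSpace ℝ (Fin d), gaugeNorm k x ≤ 1 ∧ c = (inner ℝ x y : ℝ)}

/-- The unit ball of the k-support norm, with the convention `B^sp_(0) = {0}`. -/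
def Bsp (d k : ℕ) : Set (EuclideanSpace ℝ (Fin d)) :=
  if k = 0 then {0} else {y | suppNorm k y ≤ 1}

/-- The degenerate unit sphere `S_K = {x : x_{−K} = 0 and ‖x_K‖ = 1}`. -/
def sphK (K : Finset (Fin d)) : Set (EuclideanSpace ℝ (Fin d)) :=
  {x | (∀ i, i ∉ K → x i = 0) ∧ ‖restr K x‖ = 1}

/-- The degenerate unit ball `B_K = {x : x_{−K} = 0 and ‖x_K‖ ≤ 1}`. -/
def ballK (K : Finset (Fin d)) : Set (EuclideanSpace ℝ (Fin d)) :=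
  {x | (∀ i, i ∉ K → x i = 0) ∧ ‖restr K x‖ ≤ 1}

lemma inner_restr_left (K : Finset (Fin d)) (x y : EuclideanSpace ℝ (Fin d)) :
    (inner ℝ (restr K x) y : ℝ) = (inner ℝ (restr K x) (restr K y) : ℝ) := by
  simp only [PiLp.inner_apply, RCLike.inner_apply, conj_trivial, restr, PiLp.toLp_apply]
  refine Finset.sum_congr rfl fun i _ => ?_
  by_cases h : i ∈ K <;> simp [h]

lemma restr_support (x : EuclideanSpace ℝ (Fin d)) :
    restr (Finset.univ.filter fun i => x i ≠ 0) x = x := by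
  ext i
  by_cases h : x i = 0 <;> simp [restr, h]

lemma l0_restr_le (K : Finset (Fin d)) (y : EuclideanSpace ℝ (Fin d)) :
    l0 (restr K y) ≤ K.card := by
  apply Finset.card_le_card
  intro i hi
  simp only [Finset.mem_filter, restr, ne_eq] at hi
  by_contra h
  exact hi.2 (if_neg h)

lemma gauge_bdd (k : ℕ) (y : EuclideanSpace ℝ (Fin d)) :
    BddAbove (Set.range fun K : {K : Finset (Fin d) // K.card ≤ k} =>
      ‖restr (K : Finset (Fin d)) y‖) :=
  Set.Finite.bddAbove (Set.finite_range _)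


/-- the Capra conjugate of the ℓ₀ pseudonorm:
`sup_x (¢(x,y) − ℓ₀(x)) = max_{0 ≤ l ≤ d} (‖y‖_(l) − l)`. -/
theorem capra_conjugate_l0 (d : ℕ) (hd : 1 ≤ d) (y : EuclideanSpace ℝ (Fin d)) :
    (⨆ x : EuclideanSpace ℝ (Fin d), (capra x y - (l0 x : ℝ))) =
      ⨆ l : Fin (d + 1), (gaugeNorm (l : ℕ) y - ((l : ℕ) : ℝ)) := by
  classical
  set f : EuclideanSpace ℝ (Fin d) → ℝ := fun x => capra x y - (l0 x : ℝ) with hf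
  have hcapra_le : ∀ x, capra x y ≤ ‖y‖ := by
    intro x
    by_cases hx : x = 0
    · simp [capra, hx]
    · rw [capra, if_neg hx, div_le_iff₀ (norm_pos_iff.mpr hx)]
      calc (inner ℝ x y : ℝ) ≤ ‖x‖ * ‖y‖ := real_inner_le_norm x y
        _ = ‖y‖ * ‖x‖ := mul_comm _ _
  have hbdd : BddAbove (Set.range f) := by
    refine ⟨‖y‖, ?_⟩
    rintro _ ⟨x, rfl⟩
    have : (0:ℝ) ≤ (l0 x : ℝ) := Nat.cast_nonneg _
    have := hcapra_le x
    simp only [hf]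
    linarith
  have hrbdd : BddAbove (Set.range fun l : Fin (d+1) =>
      gaugeNorm (l : ℕ) y - ((l : ℕ) : ℝ)) :=
    Set.Finite.bddAbove (Set.finite_range _)
  have hf0 : f 0 = 0 := by
    simp [hf, capra, l0]
  have hsup0 : (0:ℝ) ≤ ⨆ x, f x := hf0 ▸ le_ciSup hbdd 0
  apply le_antisymm
  · apply ciSup_le
    intro x
    by_cases hx : x = 0
    · subst hx
      rw [hf0]
      have h1 : (0:ℝ) ≤ gaugeNorm 0 y - ((0:ℕ) : ℝ) := by
        rw [Nat.cast_zero, sub_zero]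
        exact le_trans (norm_nonneg _) (le_ciSup (gauge_bdd 0 y) ⟨∅, by simp⟩)
      refine le_trans h1 ?_
      exact le_ciSup hrbdd (⟨0, by omega⟩ : Fin (d+1))
    · set K := Finset.univ.filter fun i => x i ≠ 0 with hK
      have hKcard : K.card = l0 x := rfl
      have h1 : capra x y ≤ ‖restr K y‖ := by
        rw [capra, if_neg hx, div_le_iff₀ (norm_pos_iff.mpr hx)]
        calc (inner ℝ x y : ℝ) = (inner ℝ (restr K x) y : ℝ) := by rw [restr_support]
          _ = (inner ℝ (restr K x) (restr K y) : ℝ) := inner_restr_left K x y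
          _ = (inner ℝ x (restr K y) : ℝ) := by rw [restr_support]
          _ ≤ ‖x‖ * ‖restr K y‖ := real_inner_le_norm _ _
          _ = ‖restr K y‖ * ‖x‖ := mul_comm _ _
      have h2 : ‖restr K y‖ ≤ gaugeNorm (l0 x) y :=
        le_ciSup (gauge_bdd (l0 x) y) ⟨K, le_of_eq hKcard⟩
      have h3 : l0 x ≤ d := le_trans (Finset.card_le_univ _) (by simp)
      have h4 : gaugeNorm (l0 x) y - (l0 x : ℝ) ≤
          ⨆ l : Fin (d + 1), (gaugeNorm (l : ℕ) y - ((l : ℕ) : ℝ)) :=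
        le_ciSup hrbdd (⟨l0 x, by omega⟩ : Fin (d+1))
      calc capra x y - (l0 x : ℝ) ≤ gaugeNorm (l0 x) y - (l0 x : ℝ) := by linarith
        _ ≤ _ := h4
  · apply ciSup_le
    intro l
    rw [sub_le_iff_le_add, gaugeNorm]
    haveI : Nonempty {K : Finset (Fin d) // K.card ≤ (l : ℕ)} := ⟨⟨∅, by simp⟩⟩
    apply ciSup_le
    rintro ⟨K, hK⟩
    have hl : (K.card : ℝ) ≤ (l : ℕ) := Nat.cast_le.mpr hK
    by_cases hz : restr K y = 0
    · rw [hz]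
      simp only [norm_zero]
      positivity
    · have hfx : f (restr K y) ≤ ⨆ x, f x := le_ciSup hbdd (restr K y)
      have hcap : capra (restr K y) y = ‖restr K y‖ := by
        rw [capra, if_neg hz, inner_restr_left,
          real_inner_self_eq_norm_mul_norm,
          mul_div_assoc, div_self (norm_ne_zero_iff.mpr hz), mul_one]
      have hl0 : ((l0 (restr K y) : ℕ) : ℝ) ≤ (l : ℕ) :=
        le_trans (Nat.cast_le.mpr (l0_restr_le K y)) hl
      have : f (restr K y) = ‖restr K y‖ - (l0 (restr K y) : ℝ) := by
        simp only [hf]; rw [hcap]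
      linarith
end
end

section
/- Fix d ≥ 1. The ℓ0 pseudonorm is equal to its Capra biconjugate (hence is Capra-convex): for every x ∈ ℝ^d, sup_{y ∈ ℝ^d} ( ¢(x,y) − max_{l ∈ {0,1,…,d}} ( ‖y‖_(l) − l ) ) = ℓ0(x). -/
noncomputable section

variable {d : ℕ}

lemma norm_restr (K : Finset (Fin d)) (z : EuclideanSpace ℝ (Fin d)) :
    ‖restr K z‖ = Real.sqrt (∑ i ∈ K, (z i)^2) := by
  rw [EuclideanSpace.norm_eq]
  congr 1
  simp [restr, apply_ite (fun a : ℝ => ‖a‖^2), sq_abs, Finset.sum_ite_mem]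

lemma norm_restr_le (K : Finset (Fin d)) (z : EuclideanSpace ℝ (Fin d)) :
    ‖restr K z‖ ≤ ‖z‖ := by
  rw [norm_restr, EuclideanSpace.norm_eq]
  apply Real.sqrt_le_sqrt
  calc ∑ i ∈ K, (z i)^2 ≤ ∑ i, (z i)^2 :=
        Finset.sum_le_sum_of_subset_of_nonneg (Finset.subset_univ K)
          (fun i _ _ => sq_nonneg _)
    _ = ∑ i, ‖z i‖^2 := by simp [sq_abs]

instance (k : ℕ) : Nonempty {K : Finset (Fin d) // K.card ≤ k} := ⟨⟨∅, by simp⟩⟩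

lemma norm_restr_le_gauge {K : Finset (Fin d)} {k : ℕ} (h : K.card ≤ k)
    (y : EuclideanSpace ℝ (Fin d)) : ‖restr K y‖ ≤ gaugeNorm k y :=
  le_ciSup (gauge_bdd k y) ⟨K, h⟩

lemma gaugeNorm_le' {k : ℕ} {y : EuclideanSpace ℝ (Fin d)} {c : ℝ}
    (h : ∀ K : Finset (Fin d), K.card ≤ k → ‖restr K y‖ ≤ c) : gaugeNorm k y ≤ c :=
  ciSup_le fun K => h K K.2

lemma gaugeNorm_nonneg (k : ℕ) (y : EuclideanSpace ℝ (Fin d)) : 0 ≤ gaugeNorm k y :=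
  le_trans (norm_nonneg _) (norm_restr_le_gauge (K := ∅) (by simp) y)

lemma gaugeNorm_le_norm (k : ℕ) (y : EuclideanSpace ℝ (Fin d)) : gaugeNorm k y ≤ ‖y‖ :=
  gaugeNorm_le' fun K _ => norm_restr_le K y

lemma conj_bdd (y : EuclideanSpace ℝ (Fin d)) :
    BddAbove (Set.range fun l : Fin (d+1) => gaugeNorm (l : ℕ) y - ((l : ℕ) : ℝ)) :=
  Set.Finite.bddAbove (Set.finite_range _)

lemma conj_ge {y : EuclideanSpace ℝ (Fin d)} (l : Fin (d+1)) :
    gaugeNorm (l : ℕ) y - ((l : ℕ) : ℝ)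
      ≤ ⨆ l : Fin (d + 1), (gaugeNorm (l : ℕ) y - ((l : ℕ) : ℝ)) :=
  le_ciSup (conj_bdd y) l

lemma conj_nonneg (y : EuclideanSpace ℝ (Fin d)) :
    0 ≤ ⨆ l : Fin (d + 1), (gaugeNorm (l : ℕ) y - ((l : ℕ) : ℝ)) := by
  have := conj_ge (y := y) 0
  simp only [Fin.val_zero, Nat.cast_zero, sub_zero] at this
  exact le_trans (gaugeNorm_nonneg 0 y) this

lemma inner_restr_support (x y : EuclideanSpace ℝ (Fin d)) :
    (inner ℝ x y : ℝ) = (inner ℝ x (restr (Finset.univ.filter fun i => x i ≠ 0) y) : ℝ) := by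
  simp only [PiLp.inner_apply, RCLike.inner_apply, conj_trivial]
  apply Finset.sum_congr rfl
  intro i _
  by_cases h : x i = 0 <;> simp [restr, h]

lemma l0_le_d (x : EuclideanSpace ℝ (Fin d)) : l0 x ≤ d := by
  have := Finset.card_filter_le Finset.univ (fun i => x i ≠ 0)
  simpa [l0] using this

lemma upper_bound (x y : EuclideanSpace ℝ (Fin d)) :
    capra x y - (⨆ l : Fin (d + 1), (gaugeNorm (l : ℕ) y - ((l : ℕ) : ℝ))) ≤ (l0 x : ℝ) := by
  by_cases hx : x = 0
  · have h0 : l0 x = 0 := by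
      simp only [l0, Finset.card_eq_zero, Finset.filter_eq_empty_iff]
      intro i _
      simp [hx]
    rw [h0, capra, if_pos hx]
    simpa using conj_nonneg y
  · set S := Finset.univ.filter fun i => x i ≠ 0 with hS
    have hsd : S.card ≤ d := by
      simpa using Finset.card_filter_le Finset.univ (fun i => x i ≠ 0)
    have hl0 : l0 x = S.card := rfl
    have hxpos : (0:ℝ) < ‖x‖ := norm_pos_iff.mpr hx
    have hcap : capra x y ≤ gaugeNorm S.card y := by
      rw [capra, if_neg hx, div_le_iff₀ hxpos, inner_restr_support x y]
      calc (inner ℝ x (restr S y) : ℝ) ≤ ‖x‖ * ‖restr S y‖ := real_inner_le_norm _ _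
        _ ≤ gaugeNorm S.card y * ‖x‖ := by
            rw [mul_comm]
            exact mul_le_mul_of_nonneg_right (norm_restr_le_gauge le_rfl y) hxpos.le
    have hconj : gaugeNorm S.card y - (S.card : ℝ)
        ≤ ⨆ l : Fin (d + 1), (gaugeNorm (l : ℕ) y - ((l : ℕ) : ℝ)) := by
      have := conj_ge (y := y) ⟨S.card, by omega⟩
      simpa using this
    rw [hl0]
    linarith

lemma witness_bound (x : EuclideanSpace ℝ (Fin d)) (hx : x ≠ 0) :
    ∃ y : EuclideanSpace ℝ (Fin d),
      (l0 x : ℝ) ≤ capra x y - (⨆ l : Fin (d + 1), (gaugeNorm (l : ℕ) y - ((l : ℕ) : ℝ))) := by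
  classical
  set S := Finset.univ.filter fun i => x i ≠ 0 with hS
  set s : ℕ := S.card with hs
  have hxpos : (0:ℝ) < ‖x‖ := norm_pos_iff.mpr hx
  set xh : EuclideanSpace ℝ (Fin d) := ‖x‖⁻¹ • x with hxh
  have hxhnorm : ‖xh‖ = 1 := by
    rw [hxh, norm_smul, norm_inv, norm_norm, inv_mul_cancel₀ hxpos.ne']
  have hsum1 : ∑ i, (xh i)^2 = 1 := by
    have h := real_inner_self_eq_norm_sq xh
    simp only [PiLp.inner_apply, RCLike.inner_apply, conj_trivial, hxhnorm, one_pow] at h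
    simpa [sq] using h
  have hSne : S.Nonempty := by
    rw [hS, Finset.filter_nonempty_iff]
    obtain ⟨i, hi⟩ : ∃ i, x i ≠ 0 := by
      by_contra h; push_neg at h; exact hx (by ext i; simp [h i])
    exact ⟨i, Finset.mem_univ i, hi⟩
  have hxhS : ∀ j ∈ S, xh j ≠ 0 := by
    intro j hj
    have hj' : x j ≠ 0 := (Finset.mem_filter.mp hj).2
    simp [hxh, PiLp.smul_apply, smul_eq_mul, hxpos.ne', hj']
  set m2 : ℝ := (S.image fun i => (xh i)^2).min' (hSne.image _) with hm2
  have hm2mem : m2 ∈ S.image fun i => (xh i)^2 := Finset.min'_mem _ _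
  have hm2pos : 0 < m2 := by
    obtain ⟨j, hjS, hjm⟩ := Finset.mem_image.mp hm2mem
    rw [← hjm]
    have hj := hxhS j hjS
    positivity
  have hm2le : ∀ j ∈ S, m2 ≤ (xh j)^2 := fun j hj =>
    Finset.min'_le _ _ (Finset.mem_image_of_mem _ hj)
  set c : ℝ := Real.sqrt (1 - m2) with hc
  have hc0 : 0 ≤ c := Real.sqrt_nonneg _
  have hc1 : c < 1 := by
    rw [hc]
    rcases le_or_gt (1 - m2) 0 with h | h
    · calc Real.sqrt (1 - m2) = 0 := Real.sqrt_eq_zero_of_nonpos h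
        _ < 1 := one_pos
    · calc Real.sqrt (1 - m2) < Real.sqrt 1 := Real.sqrt_lt_sqrt h.le (by linarith)
        _ = 1 := Real.sqrt_one
  set t : ℝ := (s : ℝ) / (1 - c) with ht
  have h1c : 0 < 1 - c := by linarith
  have ht0 : 0 ≤ t := div_nonneg (Nat.cast_nonneg s) h1c.le
  have htc : t * c = t - s := by
    have h : t * (1 - c) = (s:ℝ) := div_mul_cancel₀ _ h1c.ne'
    linear_combination -h
  have hts : (s:ℝ) ≤ t := by
    rw [ht, le_div_iff₀ h1c]
    nlinarith [hc0, Nat.cast_nonneg (α := ℝ) s]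
  refine ⟨t • xh, ?_⟩
  have hcap : capra x (t • xh) = t := by
    rw [capra, if_neg hx, hxh, real_inner_smul_right, real_inner_smul_right,
      real_inner_self_eq_norm_sq]
    rw [sq]
    field_simp [hxpos.ne']
  have hrestr_smul : ∀ (K : Finset (Fin d)), ‖restr K (t • xh)‖ = t * ‖restr K xh‖ := by
    intro K
    have : restr K (t • xh) = t • restr K xh := by
      ext i
      simp only [restr, PiLp.smul_apply, smul_eq_mul, PiLp.toLp_apply]
      split <;> simp
    rw [this, norm_smul, Real.norm_eq_abs, abs_of_nonneg ht0]
  have hnormy : ‖t • xh‖ = t := by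
    rw [norm_smul, Real.norm_eq_abs, abs_of_nonneg ht0, hxhnorm, mul_one]
  have hKsmall : ∀ K : Finset (Fin d), K.card < s → ‖restr K xh‖ ≤ c := by
    intro K hK
    have hnsub : ¬ S ⊆ K := fun h => absurd (Finset.card_le_card h) (by omega)
    obtain ⟨j, hjS, hjK⟩ := Finset.not_subset.mp hnsub
    have hsumK : ∑ i ∈ K, (xh i)^2 ≤ 1 - m2 := by
      have h1 : ∑ i ∈ insert j K, (xh i)^2 = (xh j)^2 + ∑ i ∈ K, (xh i)^2 := by
        rw [Finset.sum_insert hjK]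
      have h2 : ∑ i ∈ insert j K, (xh i)^2 ≤ ∑ i, (xh i)^2 :=
        Finset.sum_le_sum_of_subset_of_nonneg (Finset.subset_univ _)
          (fun i _ _ => sq_nonneg _)
      have h3 := hm2le j hjS
      rw [hsum1] at h2
      linarith
    rw [norm_restr, hc]
    exact Real.sqrt_le_sqrt hsumK
  have hconj : (⨆ l : Fin (d + 1), (gaugeNorm (l : ℕ) (t • xh) - ((l : ℕ) : ℝ))) ≤ t - s := by
    apply ciSup_le
    intro l
    rcases le_or_gt s (l : ℕ) with hl | hl
    · have := gaugeNorm_le_norm (l : ℕ) (t • xh)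
      rw [hnormy] at this
      have : ((s:ℝ)) ≤ ((l:ℕ):ℝ) := Nat.cast_le.mpr hl
      have h2 := gaugeNorm_le_norm (l : ℕ) (t • xh)
      rw [hnormy] at h2
      linarith
    · have hg : gaugeNorm (l : ℕ) (t • xh) ≤ t * c := by
        apply gaugeNorm_le'
        intro K hKl
        rw [hrestr_smul K]
        exact mul_le_mul_of_nonneg_left (hKsmall K (by omega)) ht0
      have hl0' : (0:ℝ) ≤ ((l:ℕ):ℝ) := Nat.cast_nonneg _
      linarith [htc]
  have hl0s : (l0 x : ℝ) = (s : ℝ) := rfl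
  rw [hcap, hl0s]
  linarith

/-- the ℓ₀ pseudonorm equals its Capra biconjugate (ℓ₀ is Capra-convex):
`sup_y (¢(x,y) − max_{0 ≤ l ≤ d}(‖y‖_(l) − l)) = ℓ₀(x)`. -/
theorem l0_eq_capra_biconjugate (d : ℕ) (hd : 1 ≤ d) (x : EuclideanSpace ℝ (Fin d)) :
    (⨆ y : EuclideanSpace ℝ (Fin d),
        (capra x y - ⨆ l : Fin (d + 1), (gaugeNorm (l : ℕ) y - ((l : ℕ) : ℝ)))) =
      (l0 x : ℝ) := by
  have hbdd : BddAbove (Set.range fun y : EuclideanSpace ℝ (Fin d) =>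
      capra x y - ⨆ l : Fin (d + 1), (gaugeNorm (l : ℕ) y - ((l : ℕ) : ℝ))) := by
    refine ⟨(l0 x : ℝ), ?_⟩
    rintro _ ⟨y, rfl⟩
    exact upper_bound x y
  refine le_antisymm (ciSup_le fun y => upper_bound x y) ?_
  by_cases hx : x = 0
  · have hg : ∀ l : Fin (d+1), gaugeNorm (l:ℕ) (0 : EuclideanSpace ℝ (Fin d)) = 0 := by
      intro l
      refine le_antisymm (gaugeNorm_le' fun K _ => ?_) (gaugeNorm_nonneg _ _)
      rw [norm_restr]
      simp
    have hconj0 : (⨆ l : Fin (d + 1),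
        (gaugeNorm (l : ℕ) (0:EuclideanSpace ℝ (Fin d)) - ((l : ℕ) : ℝ))) = 0 := by
      refine le_antisymm (ciSup_le fun l => ?_) (conj_nonneg 0)
      rw [hg l]
      simp
    have hcap0 : capra x 0 = 0 := by
      rw [capra]
      split <;> simp
    have hy0 : capra x 0 - (⨆ l : Fin (d + 1),
        (gaugeNorm (l : ℕ) (0:EuclideanSpace ℝ (Fin d)) - ((l : ℕ) : ℝ))) = 0 := by
      rw [hcap0, hconj0, sub_zero]
    have hl00 : (l0 x : ℝ) = 0 := by
      subst hx
      norm_num [l0, Finset.filter_eq_empty_iff]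
    rw [hl00, ← hy0]
    exact le_ciSup hbdd 0
  · obtain ⟨y, hy⟩ := witness_bound x hx
    exact le_trans hy (le_ciSup hbdd y)
end
end
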